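/- Let x_1,…,x_V ∈ ℝ^d, let e : ℝ^d → (0,1], let h ∈ (0,1], and let p ≤ 1/(V−1). For b ∈ {0,1}^{V−1}, let P_b be the probability distribution of (X,S) on {x_1,…,x_V} × {0,1} defined by: P_b(X = x_i) = p for 1 ≤ i ≤ V−1 and P_b(X = x_V) = 1 − p·(V−1); P_b(Y = 1 | X = x_i) = (1 + (2·b_i − 1)·h)/2 for 1 ≤ i ≤ V−1 and Y = 0 almost surely at x_V; and P_b(S = 1 | X = x_i, Y = y) = y·e(x_i). If b and b' differ in exactly one coordinate i ∈ {1,…,V−1}, then the squared Hellinger distance satisfies H²(P_b, P_{b'}) ≤ 2·p·e(x_i)·h². -/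
import Mathlib


open Real

noncomputable section

/-- The discrete joint distribution `P_b` of `(X, S)` on `{x_1, …, x_{m+1}} × {0,1}`
(points indexed by `Fin (m+1)`, label `S` by `Bool`), built from the marginal
`P(X = x_i) = p` for `i ≤ m`, `P(X = x_{m+1}) = 1 − p·m`, the regression values
`P(Y = 1 ∣ X = x_i) = (1 + (2·b_i − 1)·h)/2` for `i ≤ m` (and `Y = 0` at `x_{m+1}`),
and the propensity `P(S = 1 ∣ X = x_i, Y = y) = y·e(x_i)`; here `m = V − 1`. -/
def PbPU {dim m : ℕ} (x : Fin (m + 1) → (Fin dim → ℝ)) (e : (Fin dim → ℝ) → ℝ)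
    (p h : ℝ) (b : Fin m → ℝ) : Fin (m + 1) × Bool → ℝ :=
  fun q =>
    if hi : (q.1 : ℕ) < m then
      if q.2 then p * (e (x q.1) * ((1 + (2 * b ⟨q.1, hi⟩ - 1) * h) / 2))
      else p * (1 - e (x q.1) * ((1 + (2 * b ⟨q.1, hi⟩ - 1) * h) / 2))
    else
      if q.2 then 0 else 1 - p * m

lemma hell_aux (s t w : ℝ) (hs : 0 ≤ s) (ht : 0 ≤ t) (hw : 0 ≤ w) (hwt : w ≤ t ^ 2) :
    (s - t) ^ 2 * w ≤ (s ^ 2 - t ^ 2) ^ 2 := by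
  nlinarith [mul_nonneg (sq_nonneg (s - t)) (sq_nonneg s),
    mul_nonneg (mul_nonneg hs ht) (sq_nonneg (s - t)),
    mul_nonneg (sq_nonneg (s - t)) (sub_nonneg.2 hwt)]

lemma hell_core (p E h : ℝ) (hp : 0 < p) (hE0 : 0 < E) (hE1 : E ≤ 1) (hh0 : 0 < h) (hh1 : h ≤ 1) :
    (1 / 2 : ℝ) * ((Real.sqrt (p * (E * ((1 - h) / 2))) - Real.sqrt (p * (E * ((1 + h) / 2)))) ^ 2
      + (Real.sqrt (p * (1 - E * ((1 - h) / 2))) - Real.sqrt (p * (1 - E * ((1 + h) / 2)))) ^ 2)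
      ≤ 2 * p * E * h ^ 2 := by
  set A := p * (E * ((1 - h) / 2)) with hA
  set B := p * (E * ((1 + h) / 2)) with hB
  set C := p * (1 - E * ((1 - h) / 2)) with hC
  set D := p * (1 - E * ((1 + h) / 2)) with hD
  have hh1' : (0:ℝ) ≤ 1 - h := by linarith
  have hA0 : 0 ≤ A := by rw [hA]; nlinarith [mul_nonneg hp.le (mul_nonneg hE0.le hh1')]
  have hB0 : 0 ≤ B := by rw [hB]; positivity
  have hC0 : 0 ≤ C := by
    rw [hC]; nlinarith [mul_nonneg hp.le (mul_nonneg hE0.le hh1'),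
      mul_nonneg hp.le (sub_nonneg.2 hE1)]
  have hD0 : 0 ≤ D := by
    rw [hD]; nlinarith [mul_nonneg (mul_nonneg hp.le hE0.le) hh0.le,
      mul_nonneg hp.le (sub_nonneg.2 hE1)]
  have hw1 : 0 ≤ p * E / 2 := by positivity
  have hw2 : 0 ≤ p / 2 := by positivity
  have hsB := Real.sq_sqrt hB0
  have hsA := Real.sq_sqrt hA0
  have hsC := Real.sq_sqrt hC0
  have hsD := Real.sq_sqrt hD0
  have h1 : (Real.sqrt A - Real.sqrt B) ^ 2 * (p * E / 2) ≤ (A - B) ^ 2 := by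
    have := hell_aux (Real.sqrt A) (Real.sqrt B) (p * E / 2) (Real.sqrt_nonneg A)
      (Real.sqrt_nonneg B) hw1 (by rw [hsB, hB]; nlinarith)
    rwa [hsA, hsB] at this
  have h2 : (Real.sqrt D - Real.sqrt C) ^ 2 * (p / 2) ≤ (D - C) ^ 2 := by
    have := hell_aux (Real.sqrt D) (Real.sqrt C) (p / 2) (Real.sqrt_nonneg D)
      (Real.sqrt_nonneg C) hw2 (by rw [hsC, hC]; nlinarith)
    rwa [hsD, hsC] at this
  have hAB : (A - B) ^ 2 = p ^ 2 * E ^ 2 * h ^ 2 := by rw [hA, hB]; ring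
  have hDC : (D - C) ^ 2 = p ^ 2 * E ^ 2 * h ^ 2 := by rw [hD, hC]; ring
  rw [hAB] at h1; rw [hDC] at h2
  have hT1 : (Real.sqrt A - Real.sqrt B) ^ 2 ≤ 2 * p * E * h ^ 2 := by
    have hpos : 0 < p * E / 2 := by positivity
    refine le_of_mul_le_mul_right ?_ hpos
    linarith [h1]
  have hT2 : (Real.sqrt D - Real.sqrt C) ^ 2 ≤ 2 * p * E * h ^ 2 := by
    have hpos : 0 < p / 2 := by positivity
    refine le_of_mul_le_mul_right ?_ hpos
    linarith [h2,
      mul_nonneg (mul_nonneg (sq_nonneg p) (mul_nonneg hE0.le (sq_nonneg h))) (sub_nonneg.2 hE1)]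
  have hswap : (Real.sqrt C - Real.sqrt D) ^ 2 = (Real.sqrt D - Real.sqrt C) ^ 2 := by ring
  rw [hswap]
  linarith

lemma hell_core2 (p E h β γ : ℝ) (hp : 0 < p) (hE0 : 0 < E) (hE1 : E ≤ 1)
    (hh0 : 0 < h) (hh1 : h ≤ 1) (hbg : β = 0 ∧ γ = 1 ∨ β = 1 ∧ γ = 0) :
    (1 / 2 : ℝ) * ((Real.sqrt (p * (E * ((1 + (2 * β - 1) * h) / 2)))
        - Real.sqrt (p * (E * ((1 + (2 * γ - 1) * h) / 2)))) ^ 2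
      + (Real.sqrt (p * (1 - E * ((1 + (2 * β - 1) * h) / 2)))
        - Real.sqrt (p * (1 - E * ((1 + (2 * γ - 1) * h) / 2)))) ^ 2)
      ≤ 2 * p * E * h ^ 2 := by
  have e0 : (1 + (2 * (0:ℝ) - 1) * h) / 2 = (1 - h) / 2 := by ring
  have e1 : (1 + (2 * (1:ℝ) - 1) * h) / 2 = (1 + h) / 2 := by ring
  rcases hbg with ⟨hβ, hγ⟩ | ⟨hβ, hγ⟩ <;> subst hβ <;> subst hγ
  · rw [e0, e1]
    exact hell_core p E h hp hE0 hE1 hh0 hh1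
  · rw [e0, e1]
    have c1 : (Real.sqrt (p * (E * ((1 + h) / 2))) - Real.sqrt (p * (E * ((1 - h) / 2)))) ^ 2
        = (Real.sqrt (p * (E * ((1 - h) / 2))) - Real.sqrt (p * (E * ((1 + h) / 2)))) ^ 2 := by
      ring
    have c2 : (Real.sqrt (p * (1 - E * ((1 + h) / 2))) - Real.sqrt (p * (1 - E * ((1 - h) / 2)))) ^ 2
        = (Real.sqrt (p * (1 - E * ((1 - h) / 2))) - Real.sqrt (p * (1 - E * ((1 + h) / 2)))) ^ 2 := by
      ring
    rw [c1, c2]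
    exact hell_core p E h hp hE0 hE1 hh0 hh1

/-- **Lemma 2 (technical): Hellinger distance bound.** If `b` and `b'` are binary vectors
differing exactly at coordinate `i`, then the squared Hellinger distance between `P_b`
and `P_{b'}` satisfies `H²(P_b, P_{b'}) ≤ 2·p·e(x_i)·h²`. -/
theorem hellinger_sq_le
    (dim m : ℕ) (hm : 1 ≤ m)
    (x : Fin (m + 1) → (Fin dim → ℝ)) (e : (Fin dim → ℝ) → ℝ)
    (p h : ℝ) (b b' : Fin m → ℝ)
    (he : ∀ z, 0 < e z ∧ e z ≤ 1)
    (hh0 : 0 < h) (hh1 : h ≤ 1)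
    (hp0 : 0 < p) (hp : p ≤ 1 / (m : ℝ))
    (hb : ∀ j, b j = 0 ∨ b j = 1) (hb' : ∀ j, b' j = 0 ∨ b' j = 1)
    (i : Fin m) (hi : b i ≠ b' i) (hij : ∀ j, j ≠ i → b j = b' j) :
    (1 / 2 : ℝ) * ∑ q : Fin (m + 1) × Bool,
        (Real.sqrt (PbPU x e p h b q) - Real.sqrt (PbPU x e p h b' q)) ^ 2 ≤
      2 * p * e (x i.castSucc) * h ^ 2 := by
  have key : ∀ q : Fin (m + 1) × Bool, q.1 ≠ i.castSucc →
      PbPU x e p h b q = PbPU x e p h b' q := by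
    intro q hq
    unfold PbPU
    by_cases hlt : (q.1 : ℕ) < m
    · have hne : (⟨(q.1 : ℕ), hlt⟩ : Fin m) ≠ i := by
        intro hEq
        apply hq
        apply Fin.ext
        simpa using congrArg Fin.val hEq
      simp [hlt, hij _ hne]
    · simp [hlt]
  have hsum : ∑ q : Fin (m + 1) × Bool,
      (Real.sqrt (PbPU x e p h b q) - Real.sqrt (PbPU x e p h b' q)) ^ 2
      = (Real.sqrt (PbPU x e p h b (i.castSucc, true))
          - Real.sqrt (PbPU x e p h b' (i.castSucc, true))) ^ 2
      + (Real.sqrt (PbPU x e p h b (i.castSucc, false))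
          - Real.sqrt (PbPU x e p h b' (i.castSucc, false))) ^ 2 := by
    rw [Fintype.sum_prod_type]
    rw [Finset.sum_eq_single i.castSucc]
    · simp [Fintype.sum_bool]
    · intro a _ ha
      have h1 := key (a, true) ha
      have h2 := key (a, false) ha
      simp [h1, h2]
    · intro h; exact absurd (Finset.mem_univ _) h
  have hlt : ((i.castSucc : Fin (m + 1)) : ℕ) < m := by simpa using i.isLt
  have hmk : (⟨((i.castSucc : Fin (m + 1)) : ℕ), hlt⟩ : Fin m) = i := by
    apply Fin.ext; simp
  have hvt : ∀ c : Fin m → ℝ, PbPU x e p h c (i.castSucc, true)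
      = p * (e (x i.castSucc) * ((1 + (2 * c i - 1) * h) / 2)) := by
    intro c; unfold PbPU; rw [dif_pos hlt]; simp [hmk]
  have hvf : ∀ c : Fin m → ℝ, PbPU x e p h c (i.castSucc, false)
      = p * (1 - e (x i.castSucc) * ((1 + (2 * c i - 1) * h) / 2)) := by
    intro c; unfold PbPU; rw [dif_pos hlt]; simp [hmk]
  rw [hsum, hvt b, hvt b', hvf b, hvf b']
  have hbg : b i = 0 ∧ b' i = 1 ∨ b i = 1 ∧ b' i = 0 := by
    rcases hb i with h0 | h1 <;> rcases hb' i with h0' | h1'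
    · exact absurd (h0.trans h0'.symm) hi
    · exact Or.inl ⟨h0, h1'⟩
    · exact Or.inr ⟨h1, h0'⟩
    · exact absurd (h1.trans h1'.symm) hi
  obtain ⟨hE0, hE1⟩ := he (x i.castSucc)
  exact hell_core2 p (e (x i.castSucc)) h (b i) (b' i) hp0 hE0 hE1 hh0 hh1 hbg
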